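/- Let B be a set, n ≥ 1, and b₀, b₁, …, bₙ ∈ B. Then the set { f ∈ ℝ≥0^B | the maximum occurs twice among f(b₀), f(b₁), …, f(bₙ) } is a closed subset of ℝ≥0^B with the product topology (where ℝ≥0 carries the Euclidean topology). -/
import Mathlib

open scoped NNReal

/-- The maximum of a family of nonnegative reals occurs twice. -/
def MaxOccursTwice {ι : Type*} (t : ι → ℝ≥0) : Prop :=
  ∃ i j : ι, i ≠ j ∧ t i = t j ∧ ∀ k, t k ≤ t i

/-- For a set `B`, `n ≥ 1` and elements `b₀, …, bₙ ∈ B`, the set of those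
`f : B → ℝ≥0` such that the maximum occurs twice among
`f b₀, f b₁, …, f bₙ` is closed in `ℝ≥0^B` with the product topology. -/
theorem isClosed_maxTwice_set
    {B : Type*} (n : ℕ) (hn : 1 ≤ n) (b : Fin (n + 1) → B) :
    IsClosed {f : B → ℝ≥0 | MaxOccursTwice (fun i => f (b i))} := by
  have hset : {f : B → ℝ≥0 | MaxOccursTwice (fun i => f (b i))} =
      ⋃ (i : Fin (n + 1)) (j : Fin (n + 1)) (_ : i ≠ j),
        ({f : B → ℝ≥0 | f (b i) = f (b j)} ∩
          ⋂ k : Fin (n + 1), {f : B → ℝ≥0 | f (b k) ≤ f (b i)}) := by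
    ext f
    simp only [Set.mem_setOf_eq, Set.mem_iUnion, Set.mem_inter_iff, Set.mem_iInter,
      MaxOccursTwice]
    tauto
  rw [hset]
  apply isClosed_iUnion_of_finite; intro i
  apply isClosed_iUnion_of_finite; intro j
  rcases eq_or_ne i j with h | h
  · simp [h]
  simp only [Set.iUnion_eq_if, if_pos h]
  refine IsClosed.inter (isClosed_eq ?_ ?_)
    (isClosed_iInter fun k => isClosed_le ?_ ?_) <;> exact continuous_apply _
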